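/- Let X be a compact Hausdorff space and f, g ∈ C(X) continuous complex-valued functions. Then f = g if and only if for every continuous function h : X → [0,∞), the range of f·h equals the range of g·h. -/

import Mathlib

theorem stmt3 {X : Type*} [TopologicalSpace X] [CompactSpace X] [T2Space X]
    (f g : C(X, ℂ)) :
    f = g ↔
      ∀ h : C(X, ℝ), (∀ x, 0 ≤ h x) →
        Set.range (fun x => f x * (h x : ℂ)) =
          Set.range (fun x => g x * (h x : ℂ)) := by
  constructor
  · rintro rfl h _
    rfl
  · intro H
    ext x₀
    have key : ∀ ε : ℝ, 0 < ε → ‖f x₀ - g x₀‖ ≤ 3 * ε := by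
      intro ε hε
      set a := f x₀ with ha
      set b := g x₀ with hb
      set U : Set X := {y | ‖f y - a‖ < ε ∧ ‖g y - b‖ < ε} with hU
      have hUopen : IsOpen U := by
        have h1 : Continuous fun y => ‖f y - a‖ := by fun_prop
        have h2 : Continuous fun y => ‖g y - b‖ := by fun_prop
        exact (isOpen_lt h1 continuous_const).inter (isOpen_lt h2 continuous_const)
      have hx₀U : x₀ ∈ U := ⟨by simpa [ha] using hε, by simpa [hb] using hε⟩
      obtain ⟨h, h0, h1, hmem⟩ := exists_continuous_zero_one_of_isClosed
        hUopen.isClosed_compl (isClosed_singleton (x := x₀))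
        (Set.disjoint_singleton_right.mpr (by simpa using hx₀U))
      have hnn : ∀ x, 0 ≤ h x := fun x => (hmem x).1
      have hle1 : ∀ x, h x ≤ 1 := fun x => (hmem x).2
      have hx₀1 : h x₀ = 1 := h1 rfl
      have hzero : ∀ y, y ∉ U → h y = 0 := fun y hy => h0 hy
      have hr := H h hnn
      -- a ∈ range (g * h)
      have haR : ∃ y, g y * (h y : ℂ) = a := by
        have : a ∈ Set.range (fun x => f x * (h x : ℂ)) := ⟨x₀, by simp [hx₀1, ha]⟩
        rw [hr] at this
        exact this
      have hbR : ∃ y, f y * (h y : ℂ) = b := by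
        have : b ∈ Set.range (fun x => g x * (h x : ℂ)) := ⟨x₀, by simp [hx₀1, hb]⟩
        rw [← hr] at this
        exact this
      obtain ⟨y, hy⟩ := haR
      obtain ⟨y', hy'⟩ := hbR
      -- ‖b‖ ≤ ‖a‖ + ε
      have hBA : ‖b‖ ≤ ‖a‖ + ε := by
        by_cases hmemU : y' ∈ U
        · have hfa : ‖f y' - a‖ < ε := hmemU.1
          have : ‖b‖ = h y' * ‖f y'‖ := by
            rw [← hy', norm_mul, Complex.norm_real, Real.norm_of_nonneg (hnn y')]
            ring
          have hfy : ‖f y'‖ ≤ ‖a‖ + ε := by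
            calc ‖f y'‖ = ‖a + (f y' - a)‖ := by ring_nf
            _ ≤ ‖a‖ + ‖f y' - a‖ := norm_add_le _ _
            _ ≤ ‖a‖ + ε := by linarith
          nlinarith [hnn y', hle1 y', norm_nonneg (f y')]
        · have : h y' = 0 := hzero _ hmemU
          rw [← hy', this]
          simp
          positivity
      by_cases hmemU : y ∈ U
      · have hgb : ‖g y - b‖ < ε := hmemU.2
        set t := h y with ht
        set w := g y with hw
        have hAtW : ‖a‖ = t * ‖w‖ := by
          rw [← hy, norm_mul, Complex.norm_real, Real.norm_of_nonneg (hnn y)]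
          ring
        have hWB : ‖w‖ ≤ ‖b‖ + ε := by
          calc ‖w‖ = ‖b + (w - b)‖ := by ring_nf
          _ ≤ ‖b‖ + ‖w - b‖ := norm_add_le _ _
          _ ≤ ‖b‖ + ε := by linarith
        have h1t : (1 - t) * ‖b‖ ≤ 2 * ε := by
          nlinarith [hnn y, hle1 y, norm_nonneg w, norm_nonneg b]
        calc ‖a - b‖ = ‖(t : ℂ) * (w - b) + ((t : ℂ) - 1) * b‖ := by
              rw [← hy]; ring_nf
        _ ≤ ‖(t : ℂ) * (w - b)‖ + ‖((t : ℂ) - 1) * b‖ := norm_add_le _ _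
        _ = t * ‖w - b‖ + (1 - t) * ‖b‖ := by
              rw [norm_mul, norm_mul, Complex.norm_real, Real.norm_of_nonneg (hnn y)]
              have : ‖(t : ℂ) - 1‖ = 1 - t := by
                rw [show ((t : ℂ) - 1) = ((t - 1 : ℝ) : ℂ) by push_cast; ring,
                  Complex.norm_real, Real.norm_of_nonpos (by linarith [hle1 y])]
                ring
              rw [this]
        _ ≤ 3 * ε := by nlinarith [hnn y, hle1 y]
      · have h0y : h y = 0 := hzero _ hmemU
        have ha0 : a = 0 := by rw [← hy, h0y]; simp
        rw [ha0] at hBA ⊢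
        simp at hBA ⊢
        linarith
    have : ‖f x₀ - g x₀‖ ≤ 0 := by
      by_contra hc
      push_neg at hc
      have := key (‖f x₀ - g x₀‖ / 4) (by linarith)
      linarith
    have := norm_nonneg (f x₀ - g x₀)
    have : ‖f x₀ - g x₀‖ = 0 := le_antisymm ‹_› ‹_›
    simpa [sub_eq_zero] using norm_eq_zero.mp this
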